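/- For an N×N matrix A over a commutative ring whose relevant minors are invertible, the quasi-determinant equals a ratio of determinants: |A|_{ij} = (−1)^{i+j} det(A) / det(A^{ij}), where A^{ij} is A with row i and column j deleted. -/

import Mathlib

open Matrix

/-- The Gelfand–Retakh quasi-determinant `|A|_{ij}`:
`|A|_{ij} = a_{ij} − Σ_{k≠j, l≠i} a_{ik} ((A^{ij})⁻¹)_{kl} a_{lj}`,
where `A^{ij}` deletes row `i` and column `j`. -/
noncomputable def quasiDet {R : Type*} [Ring R] {N : ℕ}
    (A : Matrix (Fin (N + 1)) (Fin (N + 1)) R) (i j : Fin (N + 1)) : R :=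
  A i j - ∑ k : Fin N, ∑ l : Fin N,
    A i (j.succAbove k) *
      Ring.inverse (A.submatrix i.succAbove j.succAbove) k l *
      A (i.succAbove l) j

/-- over a commutative ring, when the complementary minor is
invertible, the quasi-determinant is a ratio of determinants:
`|A|_{ij} = (−1)^{i+j} det(A) / det(A^{ij})`. -/
theorem stmt10 {R : Type*} [CommRing R] {N : ℕ}
    (A : Matrix (Fin (N + 1)) (Fin (N + 1)) R) (i j : Fin (N + 1))
    (h : IsUnit (A.submatrix i.succAbove j.succAbove).det) :
    quasiDet A i j =
      (-1 : R) ^ ((i : ℕ) + (j : ℕ)) * A.det *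
        Ring.inverse (A.submatrix i.succAbove j.succAbove).det := by
  set M := A.submatrix i.succAbove j.succAbove with hM
  haveI : Invertible M := M.invertibleOfIsUnitDet h
  -- the matrix with row i, column j moved to position 0
  set B := A.submatrix i.cycleRange.symm j.cycleRange.symm with hB
  -- reindexing equivalence
  let e : Fin 1 ⊕ Fin N ≃ Fin (N + 1) := finSumFinEquiv.trans (finCongr (Nat.add_comm 1 N))
  have he1 : ∀ a : Fin 1, e (Sum.inl a) = 0 := by
    intro a
    ext
    simp [e, Fin.ext_iff]
  have he2 : ∀ k : Fin N, e (Sum.inr k) = k.succ := by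
    intro k
    ext
    simp [e, Nat.add_comm]
  -- block decomposition
  have hblock : B.submatrix e e =
      fromBlocks (fun _ _ => A i j) (fun _ k => A i (j.succAbove k))
        (fun k _ => A (i.succAbove k) j) M := by
    ext x y
    cases x with
    | inl a => cases y with
      | inl b => simp [he1, hB, fromBlocks]
      | inr l => simp [he1, he2, hB, fromBlocks]
    | inr k => cases y with
      | inl b => simp [he1, he2, hB, fromBlocks]
      | inr l => simp [he2, hB, hM, fromBlocks]
  have hdetB : B.det = M.det * quasiDet A i j := by
    rw [← det_submatrix_equiv_self e B, hblock]
    refine (det_fromBlocks₂₂ _ _ _ M).trans ?_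
    congr 1
    rw [det_fin_one]
    erw [Matrix.sub_apply, mul_apply]
    simp only [quasiDet]
    congr 1
    rw [Finset.sum_comm]
    refine Finset.sum_congr rfl fun l _ => ?_
    erw [mul_apply, Finset.sum_mul]
    refine Finset.sum_congr rfl fun k _ => ?_
    rw [invOf_eq_nonsing_inv, nonsing_inv_eq_ringInverse]
  have hdetB' : B.det = (-1 : R) ^ ((i : ℕ) + (j : ℕ)) * A.det := by
    have : B = (A.submatrix id ⇑j.cycleRange.symm).submatrix ⇑i.cycleRange.symm id := by
      rw [submatrix_submatrix]; rfl
    rw [this, det_permute, det_permute', Equiv.Perm.sign_symm, Equiv.Perm.sign_symm,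
      Fin.sign_cycleRange, Fin.sign_cycleRange, pow_add]
    push_cast
    ring
  have key : M.det * quasiDet A i j = (-1 : R) ^ ((i : ℕ) + (j : ℕ)) * A.det := by
    rw [← hdetB, hdetB']
  calc quasiDet A i j
      = Ring.inverse M.det * (M.det * quasiDet A i j) := by
        rw [← mul_assoc, Ring.inverse_mul_cancel _ h, one_mul]
    _ = (-1 : R) ^ ((i : ℕ) + (j : ℕ)) * A.det * Ring.inverse M.det := by
        rw [key]; ring
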